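/- Let K and L be mutually dual closed convex cones in a real Hilbert space H and suppose P_K is K-isotone. Then for all x, y ∈ H, P_K(x + y) ≤_L P_K(x) + P_K(y), i.e., P_K(x) + P_K(y) − P_K(x+y) ∈ L. -/

import Mathlib

open RealInnerProductSpace

variable {H : Type*} [NormedAddCommGroup H] [InnerProductSpace ℝ H] [CompleteSpace H]

/-- `K` is a closed convex cone (containing `0`). -/
def IsClosedConvexCone (K : Set H) : Prop :=
  IsClosed K ∧ (0 : H) ∈ K ∧ (∀ x ∈ K, ∀ y ∈ K, x + y ∈ K) ∧
    ∀ x ∈ K, ∀ t : ℝ, 0 ≤ t → t • x ∈ K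

/-- The dual cone of a set. -/
def dualSet (K : Set H) : Set H := {y | ∀ x ∈ K, 0 ≤ ⟪x, y⟫}

/-- `P` is the metric projection onto `D`. -/
def IsMetricProj (D : Set H) (P : H → H) : Prop :=
  ∀ x, P x ∈ D ∧ ∀ y ∈ D, ‖x - P x‖ ≤ ‖x - y‖

/-- The translate `x - K`. -/
def meetSet (K : Set H) (x : H) : Set H := {z | ∃ k ∈ K, z = x - k}

/-- The translate `x + K`. -/
def joinSet (K : Set H) (x : H) : Set H := {z | ∃ k ∈ K, z = x + k}

theorem K_isotone_implies_L_subadditive (K L : Set H) (hK : IsClosedConvexCone K)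
    (hL : L = dualSet K) (hKL : K = dualSet L)
    (PK : H → H) (hPK : IsMetricProj K PK)
    (hiso : ∀ u v : H, v - u ∈ K → PK v - PK u ∈ K) :
    ∀ x y : H, PK x + PK y - PK (x + y) ∈ L := by
  obtain ⟨-, hK0, hKadd, hKsmul⟩ := hK
  have hmem : ∀ z, PK z ∈ K := fun z => (hPK z).1
  have hdist : ∀ z, ∀ w ∈ K, ‖z - PK z‖ ≤ ‖z - w‖ := fun z => (hPK z).2
  -- variational inequality
  have hvar : ∀ z, ∀ w ∈ K, ⟪z - PK z, w - PK z⟫ ≤ 0 := by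
    intro z w hw
    rcases eq_or_ne w (PK z) with rfl | hne
    · simp
    by_contra hcon
    push_neg at hcon
    set u := w - PK z with hu
    set c := ⟪z - PK z, u⟫ with hcdef
    have hune : u ≠ 0 := sub_ne_zero.mpr hne
    have hq : (0:ℝ) < ‖u‖ ^ 2 := pow_pos (norm_pos_iff.mpr hune) 2
    set s := min 1 (c / ‖u‖ ^ 2) with hs
    have hs0 : 0 < s := lt_min one_pos (div_pos hcon hq)
    have hs1 : s ≤ 1 := min_le_left _ _
    have hsq : s * ‖u‖ ^ 2 ≤ c := by
      have h := min_le_right 1 (c / ‖u‖ ^ 2)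
      calc s * ‖u‖^2 ≤ (c / ‖u‖^2) * ‖u‖^2 := by nlinarith
        _ = c := div_mul_cancel₀ _ (ne_of_gt hq)
    have hmemc : PK z + s • u ∈ K := by
      have h1 : (1 - s) • PK z ∈ K := hKsmul _ (hmem z) _ (by linarith)
      have h2 : s • w ∈ K := hKsmul _ hw _ hs0.le
      have h3 := hKadd _ h1 _ h2
      have e : (1 - s) • PK z + s • w = PK z + s • u := by rw [hu]; module
      rwa [e] at h3
    have hle : ‖z - PK z‖ ≤ ‖z - (PK z + s • u)‖ := hdist z _ hmemc
    have hle2 : ‖z - PK z‖^2 ≤ ‖(z - PK z) - s • u‖^2 := by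
      have e : z - (PK z + s • u) = (z - PK z) - s • u := by abel
      rw [← e]
      exact pow_le_pow_left₀ (norm_nonneg _) hle 2
    have hexp : ‖(z - PK z) - s • u‖^2 = ‖z - PK z‖^2 - 2*(s*c) + s^2*‖u‖^2 := by
      rw [norm_sub_sq_real, real_inner_smul_right, ← hcdef, norm_smul, Real.norm_eq_abs,
        abs_of_pos hs0, mul_pow]
    nlinarith [mul_le_mul_of_nonneg_left hsq hs0.le, mul_pos hs0 hcon]
  -- fixed points
  have hfix : ∀ w ∈ K, PK w = w := by
    intro w hw
    have h0 : ‖w - PK w‖ ≤ 0 := by simpa using hdist w w hw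
    have h1 : w - PK w = 0 := norm_le_zero_iff.mp h0
    exact (sub_eq_zero.mp h1).symm
  -- nonexpansive
  have lip : ∀ a b : H, ‖PK b - PK a‖ ≤ ‖b - a‖ := by
    intro a b
    have h1 := hvar a (PK b) (hmem b)
    have h2 := hvar b (PK a) (hmem a)
    have key : ‖PK b - PK a‖^2 ≤ ⟪b - a, PK b - PK a⟫ := by
      have hb : b - a = (b - PK b) + (PK b - PK a) + (PK a - a) := by abel
      have e : ⟪b - a, PK b - PK a⟫
          = ⟪b - PK b, PK b - PK a⟫ + ‖PK b - PK a‖^2 + ⟪PK a - a, PK b - PK a⟫ := by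
        rw [hb, inner_add_left, inner_add_left, real_inner_self_eq_norm_sq]
      have e1 : ⟪b - PK b, PK b - PK a⟫ = -⟪b - PK b, PK a - PK b⟫ := by
        rw [show PK b - PK a = -(PK a - PK b) from by abel, inner_neg_right]
      have e2 : ⟪PK a - a, PK b - PK a⟫ = -⟪a - PK a, PK b - PK a⟫ := by
        rw [show PK a - a = -(a - PK a) from by abel, inner_neg_left]
      linarith [e, e1, e2]
    have cs : ⟪b - a, PK b - PK a⟫ ≤ ‖b - a‖ * ‖PK b - PK a‖ := real_inner_le_norm _ _
    rcases eq_or_lt_of_le (norm_nonneg (PK b - PK a)) with h0 | h0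
    · rw [← h0]; exact norm_nonneg _
    · have : ‖PK b - PK a‖ * ‖PK b - PK a‖ ≤ ‖b - a‖ * ‖PK b - PK a‖ := by nlinarith
      exact le_of_mul_le_mul_right this h0
  -- potential function and gradient inequality
  set φ : H → ℝ := fun v => ⟪v, PK v⟫ - ‖PK v‖^2/2 with hφdef
  have hgrad : ∀ a b : H, ⟪b - a, PK a⟫ ≤ φ b - φ a := by
    intro a b
    have hb : ‖b - PK b‖ ≤ ‖b - PK a‖ := hdist b _ (hmem a)
    have hb2 : ‖b - PK b‖^2 ≤ ‖b - PK a‖^2 := pow_le_pow_left₀ (norm_nonneg _) hb 2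
    have e1 : ‖b - PK b‖^2 = ‖b‖^2 - 2*⟪b, PK b⟫ + ‖PK b‖^2 := norm_sub_sq_real _ _
    have e2 : ‖b - PK a‖^2 = ‖b‖^2 - 2*⟪b, PK a⟫ + ‖PK a‖^2 := norm_sub_sq_real _ _
    have e3 : ⟪b - a, PK a⟫ = ⟪b, PK a⟫ - ⟪a, PK a⟫ := inner_sub_left _ _ _
    simp only [hφdef]
    linarith
  -- isotonicity reformulated
  have hisoK : ∀ w c : H, c ∈ K → PK (w + c) - PK w ∈ K := by
    intro w c hc
    exact hiso w (w + c) (by rwa [add_sub_cancel_left])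
  -- polar pairing: for c ∈ K, ⟪c, PK z - z⟫ ≥ 0
  have hpolar : ∀ z : H, ∀ c ∈ K, 0 ≤ ⟪c, PK z - z⟫ := by
    intro z c hc
    have h := hvar z (c + PK z) (hKadd _ hc _ (hmem z))
    have e : c + PK z - PK z = c := by abel
    rw [e] at h
    have e2 : PK z - z = -(z - PK z) := by abel
    rw [e2, inner_neg_right]
    have := real_inner_comm (z - PK z) c
    linarith
  intro x y
  set l := PK x + PK y - (x + y) with hldef
  have hlL : ∀ c ∈ K, 0 ≤ ⟪c, l⟫ := by
    intro c hc
    have e : l = (PK x - x) + (PK y - y) := by rw [hldef]; abel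
    rw [e, inner_add_right]
    have h1 := hpolar x c hc
    have h2 := hpolar y c hc
    linarith
  -- the mixed second difference is nonnegative
  have hDelta : ∀ (z c : H), c ∈ K →
      0 ≤ φ (z + l + c) - φ (z + l) - φ (z + c) + φ z := by
    intro z c hc
    have key : ∀ n : ℕ, 0 < n →
        -(‖l‖^2 / (n:ℝ)) ≤ φ (z + l + c) - φ (z + l) - φ (z + c) + φ z := by
      intro n hn
      have hn' : (0:ℝ) < n := Nat.cast_pos.mpr hn
      have hnne : (n:ℝ) ≠ 0 := ne_of_gt hn'
      set δ : H := ((1:ℝ)/(n:ℝ)) • l with hδdef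
      have hδnorm : ‖δ‖ = ‖l‖ / n := by
        rw [hδdef, norm_smul, Real.norm_eq_abs, abs_of_nonneg (by positivity)]
        ring
      have step : ∀ w : H,
          -(‖l‖^2/((n:ℝ)*(n:ℝ))) ≤ φ (w + δ + c) - φ (w + c) - φ (w + δ) + φ w := by
        intro w
        have g1 : ⟪δ, PK (w + c)⟫ ≤ φ (w + δ + c) - φ (w + c) := by
          have h := hgrad (w + c) (w + δ + c)
          have e : w + δ + c - (w + c) = δ := by abel
          rwa [e] at h
        have g2 : ⟪-δ, PK (w + δ)⟫ ≤ φ w - φ (w + δ) := by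
          have h := hgrad (w + δ) w
          have e : w - (w + δ) = -δ := by abel
          rwa [e] at h
        have iso1 : 0 ≤ ⟪PK (w + c) - PK w, l⟫ := hlL _ (hisoK w c hc)
        have lip1 : ‖PK w - PK (w + δ)‖ ≤ ‖l‖/n := by
          rw [norm_sub_rev]
          calc ‖PK (w + δ) - PK w‖ ≤ ‖(w + δ) - w‖ := lip w (w + δ)
            _ = ‖δ‖ := by rw [add_sub_cancel_left]
            _ = ‖l‖/n := hδnorm
        have bound2 : -(‖l‖^2/(n:ℝ)) ≤ ⟪PK w - PK (w + δ), l⟫ := by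
          have habs := abs_real_inner_le_norm (PK w - PK (w + δ)) l
          have h2 : ‖PK w - PK (w + δ)‖ * ‖l‖ ≤ ‖l‖^2/n := by
            calc ‖PK w - PK (w + δ)‖ * ‖l‖ ≤ (‖l‖/n) * ‖l‖ :=
                  mul_le_mul_of_nonneg_right lip1 (norm_nonneg _)
              _ = ‖l‖^2/n := by ring
          have h3 := neg_abs_le ⟪PK w - PK (w + δ), l⟫
          linarith
        have hδinner : ∀ v : H, ⟪δ, v⟫ = (1/(n:ℝ)) * ⟪v, l⟫ := by
          intro v
          rw [hδdef, real_inner_smul_left, real_inner_comm]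
        have e5 : ⟪δ, PK (w + c)⟫ + ⟪-δ, PK (w + δ)⟫
            = (1/(n:ℝ)) * (⟪PK (w + c) - PK w, l⟫ + ⟪PK w - PK (w + δ), l⟫) := by
          rw [inner_neg_left, hδinner, hδinner, inner_sub_left, inner_sub_left]
          ring
        have hfinal : (1/(n:ℝ)) * (0 + -(‖l‖^2/(n:ℝ)))
            ≤ (1/(n:ℝ)) * (⟪PK (w + c) - PK w, l⟫ + ⟪PK w - PK (w + δ), l⟫) := by
          apply mul_le_mul_of_nonneg_left _ (by positivity)
          linarith
        have heq : (1/(n:ℝ)) * (0 + -(‖l‖^2/(n:ℝ))) = -(‖l‖^2/((n:ℝ)*(n:ℝ))) := by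
          field_simp
          ring
        have hcomb : -(‖l‖^2/((n:ℝ)*(n:ℝ))) ≤ ⟪δ, PK (w + c)⟫ + ⟪-δ, PK (w + δ)⟫ := by
          rw [e5, ← heq]
          exact hfinal
        have hg : ⟪δ, PK (w + c)⟫ + ⟪-δ, PK (w + δ)⟫
            ≤ φ (w + δ + c) - φ (w + c) - φ (w + δ) + φ w := by linarith [g1, g2]
        exact le_trans hcomb hg
      set F : ℕ → ℝ := fun i => φ (z + (((i:ℕ):ℝ)/(n:ℝ)) • l + c) - φ (z + (((i:ℕ):ℝ)/(n:ℝ)) • l)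
        with hF
      have hsum : ∑ i ∈ Finset.range n, (F (i+1) - F i) = F n - F 0 := Finset.sum_range_sub F n
      have hFn : F n = φ (z + l + c) - φ (z + l) := by
        simp only [hF]
        rw [div_self hnne, one_smul]
      have hF0 : F 0 = φ (z + c) - φ z := by
        simp only [hF, Nat.cast_zero, zero_div, zero_smul, add_zero]
      have hterm : ∀ i : ℕ, -(‖l‖^2/((n:ℝ)*(n:ℝ))) ≤ F (i+1) - F i := by
        intro i
        have e : z + ((((i+1:ℕ)):ℝ)/(n:ℝ)) • l = (z + (((i:ℕ):ℝ)/(n:ℝ)) • l) + δ := by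
          rw [hδdef]
          push_cast
          match_scalars <;> field_simp <;> ring
        simp only [hF]
        rw [e]
        have h := step (z + (((i:ℕ):ℝ)/(n:ℝ)) • l)
        linarith
      have hsum2 : ∑ _i ∈ Finset.range n, (-(‖l‖^2/((n:ℝ)*(n:ℝ))))
          ≤ ∑ i ∈ Finset.range n, (F (i+1) - F i) :=
        Finset.sum_le_sum (fun i _ => hterm i)
      have hconst : ∑ _i ∈ Finset.range n, (-(‖l‖^2/((n:ℝ)*(n:ℝ)))) = -(‖l‖^2/(n:ℝ)) := by
        rw [Finset.sum_const, Finset.card_range, nsmul_eq_mul]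
        field_simp
      rw [hconst, hsum, hFn, hF0] at hsum2
      linarith
    by_contra hcon
    push_neg at hcon
    set D := φ (z + l + c) - φ (z + l) - φ (z + c) + φ z with hD
    have hD0 : (0:ℝ) < -D := by linarith
    obtain ⟨n, hn⟩ := exists_nat_gt (‖l‖^2 / (-D))
    have hn0 : 0 < n := by
      rcases Nat.eq_zero_or_pos n with h | h
      · exfalso
        rw [h] at hn
        have : (0:ℝ) ≤ ‖l‖^2 / (-D) := div_nonneg (by positivity) hD0.le
        norm_num at hn
        linarith
      · exact h
    have hn' : (0:ℝ) < n := Nat.cast_pos.mpr hn0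
    have h1 : ‖l‖^2 < n * (-D) := by
      have := (div_lt_iff₀ hD0).mp hn
      linarith [this, mul_comm (-D) (n:ℝ)]
    have h2 : ‖l‖^2 / n < -D := by
      rw [div_lt_iff₀ hn', mul_comm]
      linarith
    have h3 := key n hn0
    linarith
  -- main argument
  show PK x + PK y - PK (x + y) ∈ L
  rw [hL]
  simp only [dualSet, Set.mem_setOf_eq]
  intro k hk
  set z := x + y with hz
  have hzl : PK (z + l) = PK x + PK y := by
    have e : z + l = PK x + PK y := by rw [hldef]; abel
    rw [e]; exact hfix _ (hKadd _ (hmem x) _ (hmem y))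
  rw [← hzl]
  by_contra hcon
  push_neg at hcon
  set T := ⟪k, PK (z + l) - PK z⟫ with hT
  have hT0 : (0:ℝ) < -T := by linarith
  set t := (-T)/(‖k‖^2 + 1) with ht
  have ht0 : 0 < t := div_pos hT0 (by positivity)
  have hck : t • k ∈ K := hKsmul _ hk _ ht0.le
  have hDel := hDelta z (t • k) hck
  have u1 : φ (z + l + t • k) - φ (z + l) ≤ ⟪t • k, PK (z + l + t • k)⟫ := by
    have h := hgrad (z + l + t • k) (z + l)
    have e : z + l - (z + l + t • k) = -(t • k) := by abel
    rw [e, inner_neg_left] at h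
    linarith
  have u2 : ⟪t • k, PK z⟫ ≤ φ (z + t • k) - φ z := by
    have h := hgrad z (z + t • k)
    have e : z + t • k - z = t • k := by abel
    rwa [e] at h
  have u3 : ⟪k, PK (z + l + t • k) - PK (z + l)⟫ ≤ t * ‖k‖^2 := by
    have habs := abs_real_inner_le_norm k (PK (z + l + t • k) - PK (z + l))
    have hlip : ‖PK (z + l + t • k) - PK (z + l)‖ ≤ t * ‖k‖ := by
      calc ‖PK (z + l + t • k) - PK (z + l)‖ ≤ ‖(z + l + t • k) - (z + l)‖ := lip _ _
        _ = ‖t • k‖ := by rw [show (z + l + t • k) - (z + l) = t • k from by abel]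
        _ = t * ‖k‖ := by rw [norm_smul, Real.norm_eq_abs, abs_of_pos ht0]
    calc ⟪k, PK (z + l + t • k) - PK (z + l)⟫
        ≤ |⟪k, PK (z + l + t • k) - PK (z + l)⟫| := le_abs_self _
      _ ≤ ‖k‖ * ‖PK (z + l + t • k) - PK (z + l)‖ := habs
      _ ≤ ‖k‖ * (t * ‖k‖) := mul_le_mul_of_nonneg_left hlip (norm_nonneg _)
      _ = t * ‖k‖^2 := by ring
  have e6 : ⟪t • k, PK (z + l + t • k)⟫ - ⟪t • k, PK z⟫
      = t * (⟪k, PK (z + l + t • k) - PK (z + l)⟫ + T) := by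
    rw [hT]
    simp only [real_inner_smul_left, inner_sub_right]
    ring
  have step1 : 0 ≤ t * (⟪k, PK (z + l + t • k) - PK (z + l)⟫ + T) := by
    rw [← e6]; linarith
  have step2 : 0 ≤ ⟪k, PK (z + l + t • k) - PK (z + l)⟫ + T := by
    by_contra h
    push_neg at h
    nlinarith [step1]
  have hq1 : ‖k‖^2 + 1 ≠ 0 := by positivity
  have hteq : t * ‖k‖^2 + t = -T := by
    rw [ht]
    field_simp
    ring
  linarith [step2, u3, ht0, hteq]
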